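/- arXiv:1804.10171 — 5 statements merged into one kernel-verified Lean document; each statement's English description precedes it below -/
import Mathlib

section
/- Let (X, ‖·‖) be a Banach space and T : X → X a C¹ map. Suppose there exist a nonnegative constant Y and a nonnegative, increasing, continuous function Z : [0,∞) → [0,∞) such that ‖T(x̄) − x̄‖ ≤ Y and ‖DT(x)‖ ≤ Z(‖x − x̄‖) for all x ∈ X. If there exists r̄ > 0 with Y + ∫₀^r̄ Z(s) ds < r̄ and Z(r̄) < 1, then T has a unique fixed point in the closed ball of radius r̄ centered at x̄. -/
open intervalIntegral

/-- Key estimate: `‖T x - T x̄‖ ≤ ∫₀^‖x-x̄‖ Z`. -/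
lemma validation_key_estimate
    {X : Type*} [NormedAddCommGroup X] [NormedSpace ℝ X] [CompleteSpace X]
    (T : X → X) (hT : ContDiff ℝ 1 T) (xbar : X) (Z : ℝ → ℝ)
    (hZ0 : ∀ s, 0 ≤ s → 0 ≤ Z s)
    (hZcont : ContinuousOn Z (Set.Ici 0))
    (hZb : ∀ x : X, ‖fderiv ℝ T x‖ ≤ Z ‖x - xbar‖)
    (x : X) :
    ‖T x - T xbar‖ ≤ ∫ s in (0:ℝ)..‖x - xbar‖, Z s := by
  rcases eq_or_ne x xbar with hx | hx
  · simp [hx]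
  set u := x - xbar with hu
  have h0 : u ≠ 0 := sub_ne_zero.mpr hx
  set c := ‖u‖ with hc
  have hc0 : 0 < c := norm_pos_iff.mpr h0
  have hTdiff : Differentiable ℝ T := hT.differentiable one_ne_zero
  have hfderiv_cont : Continuous (fun y => fderiv ℝ T y) :=
    (hT.fderiv_right (m := 0) le_rfl).continuous
  set g : ℝ → X := fun t => T (xbar + t • u) with hg
  set g' : ℝ → X := fun t => fderiv ℝ T (xbar + t • u) u with hg'
  have hline : Continuous (fun t : ℝ => xbar + t • u) := by continuity
  have hderiv : ∀ t ∈ Set.uIcc (0:ℝ) 1, HasDerivAt g (g' t) t := by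
    intro t _
    have h1 : HasDerivAt (fun t : ℝ => xbar + t • u) u t := by
      simpa using ((hasDerivAt_id t).smul_const u).const_add xbar
    exact ((hTdiff (xbar + t • u)).hasFDerivAt.comp_hasDerivAt t h1)
  have hg'cont : Continuous g' :=
    isBoundedBilinearMap_apply.continuous.comp
      ((hfderiv_cont.comp hline).prodMk continuous_const)
  have hint : IntervalIntegrable g' MeasureTheory.volume 0 1 :=
    hg'cont.intervalIntegrable _ _
  have hftc : (∫ t in (0:ℝ)..1, g' t) = g 1 - g 0 :=
    intervalIntegral.integral_eq_sub_of_hasDerivAt hderiv hint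
  have hgv : g 1 - g 0 = T x - T xbar := by simp [hg, hu]
  have hbound : ∀ t ∈ Set.Ioc (0:ℝ) 1, ‖g' t‖ ≤ Z (c * t) * c := by
    intro t ht
    have h1 : ‖g' t‖ ≤ ‖fderiv ℝ T (xbar + t • u)‖ * ‖u‖ :=
      (fderiv ℝ T (xbar + t • u)).le_opNorm u
    have h2 : ‖fderiv ℝ T (xbar + t • u)‖ ≤ Z ‖xbar + t • u - xbar‖ := hZb _
    have h3 : ‖xbar + t • u - xbar‖ = c * t := by
      rw [add_sub_cancel_left, norm_smul, Real.norm_of_nonneg ht.1.le, mul_comm]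
    have h4 : ‖fderiv ℝ T (xbar + t • u)‖ * ‖u‖ ≤ Z (c * t) * c := by
      rw [← h3]
      exact mul_le_mul_of_nonneg_right h2 (norm_nonneg u)
    exact h1.trans h4
  have hZc : ContinuousOn (fun t : ℝ => Z (c * t) * c) (Set.uIcc (0:ℝ) 1) := by
    apply ContinuousOn.mul _ continuousOn_const
    apply hZcont.comp ((continuous_const.mul continuous_id).continuousOn)
    intro t ht
    rw [Set.uIcc_of_le (by norm_num : (0:ℝ) ≤ 1)] at ht
    exact Set.mem_Ici.mpr (mul_nonneg hc0.le ht.1)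
  have hnorm : ‖∫ t in (0:ℝ)..1, g' t‖ ≤ ∫ t in (0:ℝ)..1, Z (c * t) * c := by
    refine le_trans (intervalIntegral.norm_integral_le_of_norm_le (by norm_num) ?_
      hZc.intervalIntegrable) le_rfl
    · exact Filter.Eventually.of_forall fun t ht => hbound t ht
  have hsubst : (∫ t in (0:ℝ)..1, Z (c * t) * c) = ∫ s in (0:ℝ)..c, Z s := by
    rw [intervalIntegral.integral_mul_const,
      intervalIntegral.integral_comp_mul_left _ (ne_of_gt hc0)]
    rw [smul_eq_mul, mul_comm, mul_one, mul_zero]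
    field_simp
  calc ‖T x - T xbar‖ = ‖∫ t in (0:ℝ)..1, g' t‖ := by rw [hftc, hgv]
    _ ≤ ∫ t in (0:ℝ)..1, Z (c * t) * c := hnorm
    _ = ∫ s in (0:ℝ)..c, Z s := hsubst

/-- Contraction-based a posteriori validation theorem (Theorem 2.1 of the paper):
if `‖T x̄ - x̄‖ ≤ Y`, `‖DT x‖ ≤ Z (‖x - x̄‖)` for a nonnegative increasing continuous `Z`,
and there is `r̄ > 0` with `Y + ∫₀^r̄ Z < r̄` and `Z r̄ < 1`, then `T` has a unique fixed
point in the closed ball of radius `r̄` around `x̄`. -/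
theorem validation_fixed_point
    {X : Type*} [NormedAddCommGroup X] [NormedSpace ℝ X] [CompleteSpace X]
    (T : X → X) (hT : ContDiff ℝ 1 T) (xbar : X)
    (Y : ℝ) (hY0 : 0 ≤ Y) (Z : ℝ → ℝ)
    (hZ0 : ∀ s, 0 ≤ s → 0 ≤ Z s)
    (hZmono : MonotoneOn Z (Set.Ici 0))
    (hZcont : ContinuousOn Z (Set.Ici 0))
    (hYb : ‖T xbar - xbar‖ ≤ Y)
    (hZb : ∀ x : X, ‖fderiv ℝ T x‖ ≤ Z ‖x - xbar‖)
    (rbar : ℝ) (hrbar : 0 < rbar)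
    (h1 : Y + ∫ s in (0:ℝ)..rbar, Z s < rbar)
    (h2 : Z rbar < 1) :
    ∃! x : X, x ∈ Metric.closedBall xbar rbar ∧ T x = x := by
  set s : Set X := Metric.closedBall xbar rbar with hs
  have hTdiff : Differentiable ℝ T := hT.differentiable one_ne_zero
  have hZr0 : 0 ≤ Z rbar := hZ0 _ hrbar.le
  have hmaps : ∀ x ∈ s, T x ∈ s := by
    intro x hx
    have hxd : ‖x - xbar‖ ≤ rbar := by
      simpa [dist_eq_norm] using Metric.mem_closedBall.mp hx
    have hkey := validation_key_estimate T hT xbar Z hZ0 hZcont hZb x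
    have hmono_int : (∫ u in (0:ℝ)..‖x - xbar‖, Z u) ≤ ∫ u in (0:ℝ)..rbar, Z u := by
      apply intervalIntegral.integral_mono_interval (le_refl (0:ℝ)) (norm_nonneg _) hxd
      · filter_upwards [MeasureTheory.ae_restrict_mem measurableSet_Ioc] with t ht
        exact hZ0 t ht.1.le
      · apply ContinuousOn.intervalIntegrable
        apply hZcont.mono
        rw [Set.uIcc_of_le hrbar.le]
        intro t ht
        exact Set.mem_Ici.mpr ht.1
    have hb : ‖T x - xbar‖ ≤ Y + ∫ u in (0:ℝ)..rbar, Z u := by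
      calc ‖T x - xbar‖ = ‖(T x - T xbar) + (T xbar - xbar)‖ := by
            rw [sub_add_sub_cancel]
        _ ≤ ‖T x - T xbar‖ + ‖T xbar - xbar‖ := norm_add_le _ _
        _ ≤ (∫ u in (0:ℝ)..‖x - xbar‖, Z u) + Y := add_le_add hkey hYb
        _ ≤ Y + ∫ u in (0:ℝ)..rbar, Z u := by linarith
    exact Metric.mem_closedBall.mpr (by rw [dist_eq_norm]; linarith)
  have hlip : LipschitzOnWith (Z rbar).toNNReal T s := by
    apply Convex.lipschitzOnWith_of_nnnorm_fderiv_le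
      (fun x _ => hTdiff x) _ (convex_closedBall _ _)
    intro x hx
    have hxd : ‖x - xbar‖ ≤ rbar := by
      simpa [dist_eq_norm] using Metric.mem_closedBall.mp hx
    have hb : ‖fderiv ℝ T x‖ ≤ Z rbar :=
      (hZb x).trans (hZmono (Set.mem_Ici.mpr (norm_nonneg _))
        (Set.mem_Ici.mpr hrbar.le) hxd)
    exact (by simpa [← NNReal.coe_le_coe, Real.coe_toNNReal _ hZr0] using hb :
      ‖fderiv ℝ T x‖₊ ≤ (Z rbar).toNNReal)
  have hdist : ∀ x ∈ s, ∀ y ∈ s, dist (T x) (T y) ≤ Z rbar * dist x y := by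
    intro x hx y hy
    have := (lipschitzOnWith_iff_dist_le_mul.mp hlip) x hx y hy
    rwa [Real.coe_toNNReal _ hZr0] at this
  haveI : Nonempty s := ⟨⟨xbar, Metric.mem_closedBall_self hrbar.le⟩⟩
  haveI : CompleteSpace s := (Metric.isClosed_closedBall.isComplete).completeSpace_coe
  set f : s → s := fun x => ⟨T x, hmaps x x.2⟩ with hf
  have hcontr : ContractingWith (Z rbar).toNNReal f := by
    constructor
    · simpa [← NNReal.coe_lt_coe, Real.coe_toNNReal _ hZr0] using h2
    · intro a b
      have he : edist (f a) (f b) = edist (T (a : X)) (T (b : X)) := rfl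
      rw [he]
      exact hlip a.2 b.2
  set p : s := hcontr.fixedPoint f with hpdef
  have hp : f p = p := hcontr.fixedPoint_isFixedPt
  have hTp : T (p : X) = (p : X) := congrArg Subtype.val hp
  refine ⟨(p : X), ⟨p.2, hTp⟩, ?_⟩
  rintro y ⟨hy, hTy⟩
  by_contra hne
  have hd : 0 < dist y (p : X) := dist_pos.mpr hne
  have hle : dist y (p : X) ≤ Z rbar * dist y (p : X) := by
    calc dist y (p : X) = dist (T y) (T (p : X)) := by
          rw [hTy, hTp]
      _ ≤ Z rbar * dist y (p : X) := hdist y hy (p : X) p.2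
  nlinarith
end

section
/- Let (X, ‖·‖) be a Banach space, T : X → X a C¹ map, x̄ ∈ X, Y ≥ 0 a constant, and Z : [0,∞) → [0,∞) a nonnegative, increasing, continuous function with ‖T(x̄) − x̄‖ ≤ Y and ‖DT(x)‖ ≤ Z(‖x − x̄‖) for all x ∈ X. If there exists r̄ > 0 such that Y + ∫₀^r̄ Z(s) ds < r̄ (without requiring Z(r̄) < 1), then there exists r̃ ∈ (0, r̄] such that T has a unique fixed point in the closed ball B(x̄, r̃). -/
open intervalIntegral Set

/-- Mean value inequality along the segment: `‖T x - T x̄‖ ≤ ∫₀^{‖x-x̄‖} Z`. -/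
lemma mvt_integral {X : Type*} [NormedAddCommGroup X] [NormedSpace ℝ X] [CompleteSpace X]
    (T : X → X) (hT : ContDiff ℝ 1 T) (xbar : X) (Z : ℝ → ℝ)
    (hZcont : ContinuousOn Z (Set.Ici 0))
    (hZb : ∀ x : X, ‖fderiv ℝ T x‖ ≤ Z ‖x - xbar‖) (x : X) :
    ‖T x - T xbar‖ ≤ ∫ s in (0:ℝ)..‖x - xbar‖, Z s := by
  set v := x - xbar with hv
  set d := ‖v‖ with hd
  have hd0 : 0 ≤ d := norm_nonneg _
  rcases eq_or_lt_of_le hd0 with hd0' | hd0'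
  · have : x = xbar := by
      have : v = 0 := by rw [← norm_eq_zero]; exact hd0'.symm
      have := sub_eq_zero.mp this
      simpa [hv] using this
    simp [this, ← hd0']
  -- the curve g t = T (xbar + t • v)
  set g : ℝ → X := fun t => T (xbar + t • v) with hg
  have hdiffT := hT.differentiable one_ne_zero
  have hderiv : ∀ t : ℝ, HasDerivAt g ((fderiv ℝ T (xbar + t • v)) v) t := by
    intro t
    have h1 : HasDerivAt (fun t : ℝ => xbar + t • v) v t := by
      simpa using ((hasDerivAt_id t).smul_const v).const_add xbar
    exact ((hdiffT (xbar + t • v)).hasFDerivAt).comp_hasDerivAt t h1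
  have hcontderiv : Continuous fun t : ℝ => (fderiv ℝ T (xbar + t • v)) v := by
    have h1 : Continuous fun t : ℝ => xbar + t • v := by continuity
    have h2 : Continuous (fderiv ℝ T) := hT.continuous_fderiv one_ne_zero
    exact (h2.comp h1).clm_apply continuous_const
  have hFTC : g 1 - g 0 = ∫ t in (0:ℝ)..1, (fderiv ℝ T (xbar + t • v)) v :=
    (integral_eq_sub_of_hasDerivAt (fun t _ => hderiv t)
      (hcontderiv.intervalIntegrable 0 1)).symm
  have hg0 : g 0 = T xbar := by simp [hg]
  have hg1 : g 1 = T x := by simp [hg, hv]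
  -- bound the integral
  have hbound : ∀ t ∈ Set.Icc (0:ℝ) 1,
      ‖(fderiv ℝ T (xbar + t • v)) v‖ ≤ Z (t * d) * d := by
    intro t ht
    have h1 : ‖(fderiv ℝ T (xbar + t • v)) v‖ ≤ ‖fderiv ℝ T (xbar + t • v)‖ * d :=
      (fderiv ℝ T (xbar + t • v)).le_opNorm v
    have h2 : ‖xbar + t • v - xbar‖ = t * d := by
      rw [add_sub_cancel_left, norm_smul, Real.norm_eq_abs, abs_of_nonneg ht.1]
    have h3 : ‖fderiv ℝ T (xbar + t • v)‖ ≤ Z (t * d) := by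
      have := hZb (xbar + t • v); rwa [h2] at this
    calc ‖(fderiv ℝ T (xbar + t • v)) v‖ ≤ ‖fderiv ℝ T (xbar + t • v)‖ * d := h1
      _ ≤ Z (t * d) * d := by
          exact mul_le_mul_of_nonneg_right h3 hd0
  have hZd_cont : ContinuousOn (fun t : ℝ => Z (t * d) * d) (Set.Icc 0 1) := by
    apply ContinuousOn.mul _ continuousOn_const
    apply hZcont.comp (Continuous.continuousOn (by continuity))
    intro t ht
    exact mul_nonneg ht.1 hd0
  have hint1 : IntervalIntegrable (fun t => ‖(fderiv ℝ T (xbar + t • v)) v‖) MeasureTheory.volume 0 1 :=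
    (hcontderiv.norm).intervalIntegrable 0 1
  have hint2 : IntervalIntegrable (fun t : ℝ => Z (t * d) * d) MeasureTheory.volume 0 1 := by
    apply ContinuousOn.intervalIntegrable
    rwa [Set.uIcc_of_le zero_le_one]
  have hcov : (∫ t in (0:ℝ)..1, Z (t * d) * d) = ∫ s in (0:ℝ)..d, Z s := by
    have := intervalIntegral.smul_integral_comp_mul_right (a := (0:ℝ)) (b := 1) Z d
    simp only [zero_mul, one_mul, smul_eq_mul] at this
    calc (∫ t in (0:ℝ)..1, Z (t * d) * d) = d * ∫ t in (0:ℝ)..1, Z (t * d) := by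
          rw [intervalIntegral.integral_mul_const, mul_comm]
      _ = ∫ s in (0:ℝ)..d, Z s := this
  calc ‖T x - T xbar‖ = ‖∫ t in (0:ℝ)..1, (fderiv ℝ T (xbar + t • v)) v‖ := by
        rw [← hg1, ← hg0, hFTC]
    _ ≤ ∫ t in (0:ℝ)..1, ‖(fderiv ℝ T (xbar + t • v)) v‖ :=
        intervalIntegral.norm_integral_le_integral_norm zero_le_one
    _ ≤ ∫ t in (0:ℝ)..1, Z (t * d) * d := by
        apply intervalIntegral.integral_mono_on zero_le_one hint1 hint2 hbound
    _ = ∫ s in (0:ℝ)..d, Z s := hcov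


/-- Variant of the validation theorem (Remark 2.2 of the paper): the condition
`Y + ∫₀^r̄ Z < r̄` alone already implies the existence of some radius `r̃ ∈ (0, r̄]`
such that `T` has a unique fixed point in the closed ball of radius `r̃` around `x̄`. -/
theorem validation_fixed_point_without_Z_condition
    {X : Type*} [NormedAddCommGroup X] [NormedSpace ℝ X] [CompleteSpace X]
    (T : X → X) (hT : ContDiff ℝ 1 T) (xbar : X)
    (Y : ℝ) (hY0 : 0 ≤ Y) (Z : ℝ → ℝ)
    (hZ0 : ∀ s, 0 ≤ s → 0 ≤ Z s)
    (hZmono : MonotoneOn Z (Set.Ici 0))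
    (hZcont : ContinuousOn Z (Set.Ici 0))
    (hYb : ‖T xbar - xbar‖ ≤ Y)
    (hZb : ∀ x : X, ‖fderiv ℝ T x‖ ≤ Z ‖x - xbar‖)
    (rbar : ℝ) (hrbar : 0 < rbar)
    (h1 : Y + ∫ s in (0:ℝ)..rbar, Z s < rbar) :
    ∃ rtilde : ℝ, 0 < rtilde ∧ rtilde ≤ rbar ∧
      ∃! x : X, x ∈ Metric.closedBall xbar rtilde ∧ T x = x := by
  -- integrability of Z on subintervals of [0, ∞)
  have hZint : ∀ a b : ℝ, 0 ≤ a → 0 ≤ b →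
      IntervalIntegrable Z MeasureTheory.volume a b := by
    intro a b ha hb
    apply (hZcont.mono ?_).intervalIntegrable
    intro t ht
    exact le_trans (le_min ha hb) ht.1
  have hImono : ∀ a b : ℝ, 0 ≤ a → a ≤ b →
      (∫ s in (0:ℝ)..a, Z s) ≤ ∫ s in (0:ℝ)..b, Z s := by
    intro a b ha hab
    have hb : 0 ≤ b := ha.trans hab
    have h2 : (0:ℝ) ≤ ∫ s in a..b, Z s :=
      intervalIntegral.integral_nonneg hab (fun u hu => hZ0 u (ha.trans hu.1))
    have h3 := intervalIntegral.integral_add_adjacent_intervals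
      (hZint 0 a le_rfl ha) (hZint a b ha hb)
    linarith [h3]
  have hInonneg : ∀ a : ℝ, 0 ≤ a → (0:ℝ) ≤ ∫ s in (0:ℝ)..a, Z s := by
    intro a ha
    exact intervalIntegral.integral_nonneg ha (fun u hu => hZ0 u hu.1)
  -- Step 1: find rtilde with 0 < rtilde ≤ rbar, Z rtilde < 1, Y + ∫₀^rtilde Z ≤ rtilde
  obtain ⟨rt, hrt0, hrtle, hZlt, hP⟩ :
      ∃ rt : ℝ, 0 < rt ∧ rt ≤ rbar ∧ Z rt < 1 ∧ Y + (∫ s in (0:ℝ)..rt, Z s) ≤ rt := by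
    by_cases hc : Z rbar < 1
    · exact ⟨rbar, hrbar, le_rfl, hc, h1.le⟩
    · push_neg at hc
      set S : Set ℝ := Set.Icc 0 rbar ∩ Z ⁻¹' Set.Ici 1 with hS
      have hSne : S.Nonempty := ⟨rbar, ⟨hrbar.le, le_rfl⟩, hc⟩
      have hSbdd : BddBelow S := ⟨0, fun r hr => hr.1.1⟩
      have hSclosed : IsClosed S :=
        (hZcont.mono (fun t ht => ht.1)).preimage_isClosed_of_isClosed
          isClosed_Icc isClosed_Ici
      set r0 := sInf S with hr0
      have hr0mem : r0 ∈ S := hSclosed.csInf_mem hSne hSbdd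
      obtain ⟨⟨hr00, hr0le⟩, hr0Z⟩ := hr0mem
      -- on [r0, rbar], Z ≥ 1, hence the primitive drops enough
      have hintge : rbar - r0 ≤ ∫ s in r0..rbar, Z s := by
        have : (∫ s in r0..rbar, (1:ℝ)) ≤ ∫ s in r0..rbar, Z s := by
          apply intervalIntegral.integral_mono_on hr0le
            (intervalIntegrable_const) (hZint r0 rbar hr00 hrbar.le)
          intro u hu
          exact le_trans hr0Z (hZmono hr00 (hr00.trans hu.1) hu.1)
        simpa using this
      have hPr0 : Y + (∫ s in (0:ℝ)..r0, Z s) < r0 := by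
        have h3 := intervalIntegral.integral_add_adjacent_intervals
          (hZint 0 r0 le_rfl hr00) (hZint r0 rbar hr00 hrbar.le)
        linarith [h3, hintge]
      have hr0pos : 0 < r0 := by
        rcases lt_or_eq_of_le hr00 with h | h
        · exact h
        · exfalso; have := hInonneg r0 hr00; linarith
      set δ := r0 - (Y + ∫ s in (0:ℝ)..r0, Z s) with hδ
      have hδpos : 0 < δ := by simp only [hδ]; linarith
      set ε := min δ (r0 / 2) with hε
      have hεpos : 0 < ε := lt_min hδpos (by linarith)
      refine ⟨r0 - ε, ?_, ?_, ?_, ?_⟩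
      · have : ε ≤ r0 / 2 := min_le_right _ _
        linarith
      · have : ε ≤ r0 / 2 := min_le_right _ _
        linarith
      · by_contra hge
        push_neg at hge
        have hmem : r0 - ε ∈ S := by
          constructor
          · constructor
            · have : ε ≤ r0 / 2 := min_le_right _ _; linarith
            · linarith
          · exact hge
        have := csInf_le hSbdd hmem
        linarith
      · have h4 : (∫ s in (0:ℝ)..(r0 - ε), Z s) ≤ ∫ s in (0:ℝ)..r0, Z s := by
          apply hImono
          · have : ε ≤ r0 / 2 := min_le_right _ _; linarith
          · linarith
        have h5 : ε ≤ δ := min_le_left _ _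
        simp only [hδ] at h5
        linarith
  -- Step 2: contraction argument on the closed ball of radius rt
  refine ⟨rt, hrt0, hrtle, ?_⟩
  set s : Set X := Metric.closedBall xbar rt with hs
  have hZrt0 : 0 ≤ Z rt := hZ0 rt hrt0.le
  have hdiffT := hT.differentiable one_ne_zero
  have hfb : ∀ x ∈ s, ‖fderiv ℝ T x‖ ≤ Z rt := by
    intro x hx
    have hxd : ‖x - xbar‖ ≤ rt := by rwa [Metric.mem_closedBall, dist_eq_norm] at hx
    exact (hZb x).trans (hZmono (norm_nonneg _) hrt0.le hxd)
  -- T maps s into s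
  have hmaps : Set.MapsTo T s s := by
    intro x hx
    have hxd : ‖x - xbar‖ ≤ rt := by rwa [Metric.mem_closedBall, dist_eq_norm] at hx
    have h2 : ‖T x - T xbar‖ ≤ ∫ u in (0:ℝ)..‖x - xbar‖, Z u :=
      mvt_integral T hT xbar Z hZcont hZb x
    have h3 : (∫ u in (0:ℝ)..‖x - xbar‖, Z u) ≤ ∫ u in (0:ℝ)..rt, Z u :=
      hImono _ _ (norm_nonneg _) hxd
    have h4 : ‖T x - xbar‖ ≤ ‖T x - T xbar‖ + ‖T xbar - xbar‖ := by
      have := norm_add_le (T x - T xbar) (T xbar - xbar)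
      simpa using this
    rw [Metric.mem_closedBall, dist_eq_norm]
    calc ‖T x - xbar‖ ≤ ‖T x - T xbar‖ + ‖T xbar - xbar‖ := h4
      _ ≤ (∫ u in (0:ℝ)..rt, Z u) + Y := add_le_add (h2.trans h3) hYb
      _ ≤ rt := by linarith
  -- Lipschitz constant
  set k : NNReal := ⟨Z rt, hZrt0⟩ with hk
  have hk1 : k < 1 := by
    rw [← NNReal.coe_lt_coe]; exact hZlt
  have hlip : LipschitzOnWith k T s := by
    apply Convex.lipschitzOnWith_of_nnnorm_fderiv_le
      (fun x _ => hdiffT x) ?_ (convex_closedBall xbar rt)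
    intro x hx
    rw [← NNReal.coe_le_coe, coe_nnnorm]
    exact hfb x hx
  have hcontract : ContractingWith k (hmaps.restrict T s s) :=
    ⟨hk1, hlip.mapsToRestrict hmaps⟩
  have hsc : IsComplete s := Metric.isClosed_closedBall.isComplete
  have hxbar : xbar ∈ s := Metric.mem_closedBall_self hrt0.le
  obtain ⟨y, hys, hyfix, -, -⟩ :=
    hcontract.exists_fixedPoint' hsc hmaps hxbar (edist_ne_top _ _)
  refine ⟨y, ⟨hys, hyfix⟩, ?_⟩
  rintro z ⟨hzs, hzfix⟩
  -- uniqueness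
  have hd : ‖z - y‖ ≤ Z rt * ‖z - y‖ := by
    have := (convex_closedBall xbar rt).norm_image_sub_le_of_norm_fderiv_le
      (fun x _ => hdiffT x) hfb hys hzs
    rwa [hzfix, hyfix] at this
  have : (1 - Z rt) * ‖z - y‖ ≤ 0 := by linarith
  have hzy : ‖z - y‖ = 0 := by
    by_contra hne
    have h5 : 0 < ‖z - y‖ := lt_of_le_of_ne (norm_nonneg _) (Ne.symm hne)
    nlinarith
  have := sub_eq_zero.mp (norm_eq_zero.mp hzy)
  exact this
end

section
/- Let A be a d × d real matrix with strictly positive entries. There exists a left eigenvector η̄ with strictly positive coefficients associated to the spectral radius ρ(A), i.e. η̄ᵀ A = ρ(A) η̄ᵀ. Moreover, for the weighted operator norm |A|_η = max_{1≤j≤d} (1/η^(j)) Σ_{i=1}^d |A^(i,j)| η^(i), one has |A|_{η̄} = ρ(A) = inf over all positive weight vectors η of |A|_η. -/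
open scoped BigOperators

/-- The spectral radius of a real square matrix: the supremum of the moduli of its
complex eigenvalues. -/
noncomputable def specRad {d : ℕ} (A : Matrix (Fin d) (Fin d) ℝ) : ℝ :=
  sSup ((fun z : ℂ => ‖z‖) '' spectrum ℂ (A.map (Complex.ofReal)))

/-- The operator norm of a matrix induced by the weighted 1-norm
`|x|_η = ∑ i, |x i| * η i`, given by the explicit column formula. -/
noncomputable def wOpNorm {d : ℕ} (η : Fin d → ℝ) (A : Matrix (Fin d) (Fin d) ℝ) : ℝ :=
  ⨆ j, (∑ i, |A i j| * η i) / η j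

open Matrix Finset


-- membership in matrix spectrum via determinant
lemma mem_spectrum_iff_det {n : ℕ} (M : Matrix (Fin n) (Fin n) ℂ) (z : ℂ) :
    z ∈ spectrum ℂ M ↔ (z • (1 : Matrix (Fin n) (Fin n) ℂ) - M).det = 0 := by
  rw [spectrum.mem_iff, Matrix.isUnit_iff_isUnit_det, isUnit_iff_ne_zero, not_not]
  congr! 2
  ext i j
  simp [Matrix.algebraMap_matrix_apply, Matrix.one_apply, Matrix.smul_apply]


lemma perron_exists (d : ℕ) (B : Matrix (Fin (d+1)) (Fin (d+1)) ℝ)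
    (hB : ∀ i j, 0 < B i j) :
    ∃ (η : Fin (d+1) → ℝ) (r : ℝ), (∀ i, 0 < η i) ∧ 0 < r ∧ B.mulVec η = r • η := by
  classical
  have hne : (Finset.univ : Finset (Fin (d+1))).Nonempty := univ_nonempty
  -- min and max entries
  obtain ⟨p0⟩ : Nonempty (Fin (d+1) × Fin (d+1)) := inferInstance
  set m : ℝ := Finset.univ.inf' univ_nonempty (fun p : Fin (d+1) × Fin (d+1) => B p.1 p.2) with hm
  set Mx : ℝ := Finset.univ.sup' univ_nonempty (fun p : Fin (d+1) × Fin (d+1) => B p.1 p.2) with hMx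
  have hm_pos : 0 < m := by
    rw [hm, Finset.lt_inf'_iff]
    exact fun p _ => hB p.1 p.2
  have hm_le : ∀ i j, m ≤ B i j := fun i j =>
    Finset.inf'_le _ (Finset.mem_univ (i, j))
  have hle_Mx : ∀ i j, B i j ≤ Mx := fun i j =>
    Finset.le_sup' (f := fun p : Fin (d+1) × Fin (d+1) => B p.1 p.2) (Finset.mem_univ (i, j))
  have hMx_pos : 0 < Mx := lt_of_lt_of_le hm_pos (hm_le p0.1 p0.2 |>.trans (hle_Mx p0.1 p0.2))
  set δ : ℝ := m / ((d+1 : ℝ) * Mx) with hδ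
  have hn_pos : (0:ℝ) < (d+1:ℝ) := by positivity
  have hδ_pos : 0 < δ := by positivity
  -- the compact set S
  set S : Set (Fin (d+1) → ℝ) := {x | (∀ i, δ ≤ x i) ∧ ∑ i, x i = 1} with hS
  have hmemS : ∀ x ∈ S, ∀ i, 0 < x i := fun x hx i => lt_of_lt_of_le hδ_pos (hx.1 i)
  -- normalization claim
  have hnorm : ∀ x : Fin (d+1) → ℝ, (∀ i, 0 ≤ x i) → (∑ i, x i = 1) →
      (∀ i, m ≤ B.mulVec x i) ∧ (0 < ∑ i, B.mulVec x i) ∧ (∑ i, B.mulVec x i ≤ (d+1:ℝ) * Mx) ∧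
      (fun i => B.mulVec x i / (∑ i, B.mulVec x i)) ∈ S := by
    intro x hx0 hx1
    have hlow : ∀ i, m ≤ B.mulVec x i := by
      intro i
      have : ∑ j, m * x j ≤ ∑ j, B i j * x j :=
        Finset.sum_le_sum fun j _ => mul_le_mul_of_nonneg_right (hm_le i j) (hx0 j)
      simpa [Matrix.mulVec, dotProduct, ← Finset.mul_sum, hx1] using this
    have hup : ∀ i, B.mulVec x i ≤ Mx := by
      intro i
      have : ∑ j, B i j * x j ≤ ∑ j, Mx * x j :=
        Finset.sum_le_sum fun j _ => mul_le_mul_of_nonneg_right (hle_Mx i j) (hx0 j)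
      simpa [Matrix.mulVec, dotProduct, ← Finset.mul_sum, hx1] using this
    set t := ∑ i, B.mulVec x i with ht
    have ht_pos : 0 < t := by
      have : ∑ i, m ≤ t := Finset.sum_le_sum fun i _ => hlow i
      have hmn : (0:ℝ) < (d+1:ℝ) * m := by positivity
      simp only [Finset.sum_const, Finset.card_univ, Fintype.card_fin, nsmul_eq_mul,
        Nat.cast_add, Nat.cast_one] at this
      nlinarith
    have ht_up : t ≤ (d+1:ℝ) * Mx := by
      have : t ≤ ∑ _i : Fin (d+1), Mx := Finset.sum_le_sum fun i _ => hup i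
      simpa [Finset.sum_const, Finset.card_univ, mul_comm] using this
    refine ⟨hlow, ht_pos, ht_up, ⟨fun i => ?_, ?_⟩⟩
    · have h1 : δ ≤ m / t := by
        rw [hδ]; gcongr
      have h2 : m / t ≤ B.mulVec x i / t := by gcongr; exact hlow i
      exact h1.trans h2
    · rw [← Finset.sum_div, ← ht, div_self ht_pos.ne']
  -- S is nonempty
  have hδ_le : δ ≤ 1 / (d+1:ℝ) := by
    rw [hδ]
    rw [div_le_div_iff₀ (by positivity) (by positivity)]
    nlinarith [hm_le p0.1 p0.2, hle_Mx p0.1 p0.2]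
  have hS_ne : S.Nonempty := by
    refine ⟨fun _ => 1 / (d+1:ℝ), fun i => hδ_le, ?_⟩
    rw [Finset.sum_const, Finset.card_univ, Fintype.card_fin, nsmul_eq_mul]
    field_simp
    norm_num
  -- S is compact
  have hS_cpt : IsCompact S := by
    have hsub : S ⊆ Set.pi Set.univ (fun _ : Fin (d+1) => Set.Icc δ 1) := by
      intro x hx
      intro i _
      refine ⟨hx.1 i, ?_⟩
      have : x i ≤ ∑ j, x j :=
        Finset.single_le_sum (fun j _ => le_of_lt (hmemS x hx j)) (Finset.mem_univ i)
      simpa [hx.2] using this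
    refine IsCompact.of_isClosed_subset (isCompact_univ_pi fun _ => isCompact_Icc) ?_ hsub
    have h1 : IsClosed {x : Fin (d+1) → ℝ | ∀ i, δ ≤ x i} := by
      have : {x : Fin (d+1) → ℝ | ∀ i, δ ≤ x i} = ⋂ i, {x | δ ≤ x i} := by
        ext x; simp
      rw [this]
      exact isClosed_iInter fun i => isClosed_le continuous_const (continuous_apply i)
    have h2 : IsClosed {x : Fin (d+1) → ℝ | ∑ i, x i = 1} :=
      isClosed_eq (continuous_finset_sum _ fun i _ => continuous_apply i) continuous_const
    exact h1.inter h2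
  -- the Collatz-Wielandt function
  set f : (Fin (d+1) → ℝ) → ℝ :=
    fun x => Finset.univ.inf' univ_nonempty (fun i => B.mulVec x i / x i) with hf
  have hf_cont : ContinuousOn f S := by
    apply ContinuousOn.finset_inf'_apply
    intro i _
    apply ContinuousOn.div
    · have hfun : (fun x : Fin (d+1) → ℝ => B.mulVec x i) = fun x => ∑ j, B i j * x j := by
        funext x; rfl
      rw [hfun]
      exact (continuous_finset_sum _ fun j _ => (continuous_const.mul (continuous_apply j))).continuousOn
    · exact (continuous_apply i).continuousOn
    · exact fun x hx => (hmemS x hx i).ne'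
  obtain ⟨xb, hxbS, hxb_max⟩ := hS_cpt.exists_isMaxOn hS_ne hf_cont
  set r : ℝ := f xb with hr
  have hxb_pos : ∀ i, 0 < xb i := hmemS xb hxbS
  have hr_le : ∀ i, r * xb i ≤ B.mulVec xb i := by
    intro i
    have : r ≤ B.mulVec xb i / xb i := Finset.inf'_le _ (Finset.mem_univ i)
    rwa [le_div_iff₀ (hxb_pos i)] at this
  have hr_pos : 0 < r := by
    rw [hr, hf, Finset.lt_inf'_iff]
    intro i _
    apply div_pos _ (hxb_pos i)
    calc (0:ℝ) < m := hm_pos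
    _ ≤ B.mulVec xb i := (hnorm xb (fun i => (hxb_pos i).le) hxbS.2).1 i
  refine ⟨xb, r, hxb_pos, hr_pos, ?_⟩
  by_contra hne_eq
  -- there is a strict coordinate
  have hstrict : ∃ i0, r * xb i0 < B.mulVec xb i0 := by
    by_contra h
    push_neg at h
    apply hne_eq
    funext i
    have := le_antisymm (h i) (hr_le i)
    simpa [Pi.smul_apply, smul_eq_mul] using this
  obtain ⟨i0, hi0⟩ := hstrict
  set y := B.mulVec xb with hy
  have hy_pos : ∀ i, 0 < y i := fun i => lt_of_lt_of_le hm_pos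
    ((hnorm xb (fun i => (hxb_pos i).le) hxbS.2).1 i)
  -- B y > r y componentwise
  have hBy : ∀ i, r * y i < B.mulVec y i := by
    intro i
    have hw : ∀ j, 0 ≤ y j - r * xb j := fun j => sub_nonneg.2 (hr_le j)
    have hkey : B i i0 * (y i0 - r * xb i0) ≤ ∑ j, B i j * (y j - r * xb j) :=
      Finset.single_le_sum (fun j _ => mul_nonneg (hB i j).le (hw j)) (Finset.mem_univ i0)
    have hpos : 0 < B i i0 * (y i0 - r * xb i0) :=
      mul_pos (hB i i0) (sub_pos.2 hi0)
    have hexpand : ∑ j, B i j * (y j - r * xb j) = B.mulVec y i - r * y i := by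
      have h1 : B.mulVec y i = ∑ j, B i j * y j := rfl
      have h2 : y i = ∑ j, B i j * xb j := rfl
      rw [h1, h2, Finset.mul_sum, ← Finset.sum_sub_distrib]
      exact Finset.sum_congr rfl fun j _ => by ring
    linarith [hpos.trans_le (hkey.trans_eq hexpand)]
  -- normalize y and contradict maximality
  set t := ∑ i, y i with ht
  have hnorm_y := hnorm xb (fun i => (hxb_pos i).le) hxbS.2
  have ht_pos : 0 < t := hnorm_y.2.1
  have hzS : (fun i => y i / t) ∈ S := hnorm_y.2.2.2
  have hfz : r < f (fun i => y i / t) := by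
    rw [hf, Finset.lt_inf'_iff]
    intro i _
    have hmv : B.mulVec (fun i => y i / t) i = B.mulVec y i / t := by
      simp only [Matrix.mulVec, dotProduct, Finset.sum_div]
      exact Finset.sum_congr rfl fun j _ => by ring
    show r < (B.mulVec (fun i => y i / t)) i / (y i / t)
    rw [hmv]
    have hre : (B.mulVec y) i / t / (y i / t) = (B.mulVec y) i / y i := by
      field_simp
    rw [hre, lt_div_iff₀ (hy_pos i)]
    exact hBy i
  exact absurd (hxb_max hzS) (not_le.2 hfz)

lemma wOpNorm_col_le {d : ℕ} (η : Fin (d+1) → ℝ) (A : Matrix (Fin (d+1)) (Fin (d+1)) ℝ)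
    (hη : ∀ i, 0 < η i) (j : Fin (d+1)) :
    ∑ i, |A i j| * η i ≤ wOpNorm η A * η j := by
  have h : (∑ i, |A i j| * η i) / η j ≤ wOpNorm η A :=
    le_ciSup (f := fun j => (∑ i, |A i j| * η i) / η j)
      (Set.Finite.bddAbove (Set.finite_range _)) j
  rwa [div_le_iff₀ (hη j)] at h

lemma spec_le_wOpNorm {d : ℕ} (A : Matrix (Fin (d+1)) (Fin (d+1)) ℝ)
    (η : Fin (d+1) → ℝ) (hη : ∀ i, 0 < η i) (z : ℂ)
    (hz : z ∈ spectrum ℂ (A.map Complex.ofReal)) :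
    ‖z‖ ≤ wOpNorm η A := by
  classical
  set M := A.map Complex.ofReal with hM
  rw [mem_spectrum_iff_det] at hz
  obtain ⟨v, hv0, hv⟩ := (Matrix.exists_mulVec_eq_zero_iff).2 hz
  have heig : ∀ i, z * v i = ∑ j, (A i j : ℂ) * v j := by
    intro i
    have := congrFun hv i
    simp only [Matrix.sub_mulVec, Matrix.smul_mulVec, Matrix.one_mulVec,
      Pi.sub_apply, Pi.smul_apply, smul_eq_mul, Pi.zero_apply, sub_eq_zero] at this
    rw [this]
    simp [Matrix.mulVec, dotProduct, hM, Matrix.map_apply]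
  set c := wOpNorm η A with hc
  set Sv := ∑ j, ‖v j‖ * η j with hSv
  have hSv_pos : 0 < Sv := by
    obtain ⟨j0, hj0⟩ : ∃ j, v j ≠ 0 := by
      by_contra h; push_neg at h; exact hv0 (funext h)
    apply Finset.sum_pos'
    · intro j _
      exact mul_nonneg (norm_nonneg _) (hη j).le
    · exact ⟨j0, Finset.mem_univ j0, mul_pos (by simpa using hj0) (hη j0)⟩
  have key : ‖z‖ * Sv ≤ c * Sv := by
    have step1 : ‖z‖ * Sv = ∑ i, ‖z * v i‖ * η i := by
      rw [hSv, Finset.mul_sum]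
      exact Finset.sum_congr rfl fun i _ => by rw [norm_mul]; ring
    have step2 : ∀ i, ‖z * v i‖ * η i
        ≤ (∑ j, |A i j| * ‖v j‖) * η i := by
      intro i
      apply mul_le_mul_of_nonneg_right _ (hη i).le
      rw [heig i]
      calc ‖∑ j, (A i j : ℂ) * v j‖ ≤ ∑ j, ‖(A i j : ℂ) * v j‖ :=
            norm_sum_le _ _
        _ = ∑ j, |A i j| * ‖v j‖ :=
            Finset.sum_congr rfl fun j _ => by
              rw [norm_mul, Complex.norm_real, Real.norm_eq_abs]
    have step3 : ∑ i, (∑ j, |A i j| * ‖v j‖) * η i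
        = ∑ j, (∑ i, |A i j| * η i) * ‖v j‖ := by
      simp only [Finset.sum_mul]
      rw [Finset.sum_comm]
      exact Finset.sum_congr rfl fun j _ => Finset.sum_congr rfl fun i _ => by ring
    have step4 : ∑ j, (∑ i, |A i j| * η i) * ‖v j‖
        ≤ ∑ j, (c * η j) * ‖v j‖ := by
      apply Finset.sum_le_sum
      intro j _
      exact mul_le_mul_of_nonneg_right (wOpNorm_col_le η A hη j) (norm_nonneg _)
    have step5 : ∑ j, (c * η j) * ‖v j‖ = c * Sv := by
      rw [hSv, Finset.mul_sum]
      exact Finset.sum_congr rfl fun j _ => by ring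
    calc ‖z‖ * Sv = ∑ i, ‖z * v i‖ * η i := step1
      _ ≤ ∑ i, (∑ j, |A i j| * ‖v j‖) * η i := Finset.sum_le_sum fun i _ => step2 i
      _ = ∑ j, (∑ i, |A i j| * η i) * ‖v j‖ := step3
      _ ≤ ∑ j, (c * η j) * ‖v j‖ := step4
      _ = c * Sv := step5
  exact le_of_mul_le_mul_right key hSv_pos

/-- Proposition 2.3 of the paper (Perron–Frobenius): a matrix with positive entries has
a positive left eigenvector `η̄` for the spectral radius, the associated weighted operator
norm equals the spectral radius, and this is the infimum over all positive weights. -/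
theorem perron_frobenius_optimal_weights
    (d : ℕ) (A : Matrix (Fin (d + 1)) (Fin (d + 1)) ℝ) (hA : ∀ i j, 0 < A i j) :
    ∃ η : Fin (d + 1) → ℝ, (∀ i, 0 < η i) ∧
      (∀ j, ∑ i, η i * A i j = specRad A * η j) ∧
      wOpNorm η A = specRad A ∧
      ∀ η' : Fin (d + 1) → ℝ, (∀ i, 0 < η' i) → specRad A ≤ wOpNorm η' A := by
  classical
  obtain ⟨η, r, hη, hr, heig⟩ := perron_exists d Aᵀ (fun i j => hA j i)
  -- column sums
  have hcol : ∀ j, ∑ i, η i * A i j = r * η j := by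
    intro j
    have h1 := congrFun heig j
    simp only [Matrix.mulVec, dotProduct, Matrix.transpose_apply, Pi.smul_apply,
      smul_eq_mul] at h1
    rw [← h1]
    exact Finset.sum_congr rfl fun i _ => mul_comm _ _
  -- wOpNorm η A = r
  have hwr : wOpNorm η A = r := by
    have hterm : ∀ j, (∑ i, |A i j| * η i) / η j = r := by
      intro j
      rw [div_eq_iff (hη j).ne']
      rw [← hcol j]
      exact Finset.sum_congr rfl fun i _ => by
        rw [abs_of_pos (hA i j)]; ring
    simp only [wOpNorm, hterm, ciSup_const]
  -- r is in the complex spectrum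
  have hspec : (r : ℂ) ∈ spectrum ℂ (A.map Complex.ofReal) := by
    rw [mem_spectrum_iff_det]
    -- real determinant vanishes
    have hdetT : (r • (1 : Matrix (Fin (d+1)) (Fin (d+1)) ℝ) - Aᵀ).det = 0 := by
      rw [← Matrix.exists_mulVec_eq_zero_iff]
      refine ⟨η, fun h => (hη 0).ne' (congrFun h 0), ?_⟩
      rw [Matrix.sub_mulVec, Matrix.smul_mulVec, Matrix.one_mulVec, heig, sub_self]
    have hdet : (r • (1 : Matrix (Fin (d+1)) (Fin (d+1)) ℝ) - A).det = 0 := by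
      have : (r • (1 : Matrix (Fin (d+1)) (Fin (d+1)) ℝ) - A)ᵀ
          = r • (1 : Matrix (Fin (d+1)) (Fin (d+1)) ℝ) - Aᵀ := by
        rw [Matrix.transpose_sub, Matrix.transpose_smul, Matrix.transpose_one]
      rw [← Matrix.det_transpose, this, hdetT]
    have hmap : (r : ℂ) • (1 : Matrix (Fin (d+1)) (Fin (d+1)) ℂ) - A.map Complex.ofReal
        = (r • (1 : Matrix (Fin (d+1)) (Fin (d+1)) ℝ) - A).map Complex.ofReal := by
      ext i j
      simp [Matrix.map_apply, Matrix.sub_apply, Matrix.smul_apply, Matrix.one_apply,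
        apply_ite Complex.ofReal]
    rw [hmap]
    rw [show (r • (1 : Matrix (Fin (d+1)) (Fin (d+1)) ℝ) - A).map Complex.ofReal
        = Complex.ofRealHom.mapMatrix (r • 1 - A) from rfl]
    rw [← RingHom.map_det, hdet, map_zero]
  -- sSup identification
  set T := (fun z : ℂ => ‖z‖) '' spectrum ℂ (A.map Complex.ofReal) with hT
  have hmem : r ∈ T := ⟨(r : ℂ), hspec, by simp [Complex.norm_real, abs_of_pos hr]⟩
  have hub : ∀ w ∈ T, w ≤ r := by
    rintro w ⟨z, hz, rfl⟩
    exact (spec_le_wOpNorm A η hη z hz).trans_eq hwr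
  have hsup : specRad A = r := by
    rw [specRad, ← hT]
    exact le_antisymm (csSup_le ⟨r, hmem⟩ hub) (le_csSup ⟨r, hub⟩ hmem)
  refine ⟨η, hη, ?_, ?_, ?_⟩
  · intro j; rw [hsup]; exact hcol j
  · rw [hwr, hsup]
  · intro η' hη'
    rw [hsup]
    have := spec_le_wOpNorm A η' hη' (r : ℂ) hspec
    simpa [Complex.norm_real, abs_of_pos hr] using this
end

section
/- Let X be a Banach space and T : X → X be C¹. Fix x̄ ∈ X, r* > 0, and nonnegative constants Y, Z₁, Z₂ such that ‖T(x̄) − x̄‖ ≤ Y, ‖DT(x̄)‖ ≤ Z₁, and ‖DT(x) − DT(x̄)‖ ≤ Z₂‖x − x̄‖ for all x in the closed ball B(x̄, r*). If there exists r̄ ∈ (0, r*] with (Z₂/2) r̄² − (1 − Z₁) r̄ + Y < 0 and Z₁ + Z₂ r̄ < 1, then T has a unique fixed point in B(x̄, r̄). -/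
/-- The quadratic (Newton–Kantorovich type) validation theorem used in Section 3.1 of
the paper: with `Z(r) = Z₁ + Z₂ r`, if `(Z₂/2) r̄² − (1 − Z₁) r̄ + Y < 0` and
`Z₁ + Z₂ r̄ < 1` for some `r̄ ∈ (0, r*]`, then `T` has a unique fixed point in the
closed ball of radius `r̄` around `x̄`. -/
theorem quadratic_validation_fixed_point
    {X : Type*} [NormedAddCommGroup X] [NormedSpace ℝ X] [CompleteSpace X]
    (T : X → X) (hT : ContDiff ℝ 1 T) (xbar : X)
    (rstar : ℝ) (hrstar : 0 < rstar)
    (Y Z₁ Z₂ : ℝ) (hY0 : 0 ≤ Y) (hZ10 : 0 ≤ Z₁) (hZ20 : 0 ≤ Z₂)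
    (hY : ‖T xbar - xbar‖ ≤ Y)
    (hZ1 : ‖fderiv ℝ T xbar‖ ≤ Z₁)
    (hZ2 : ∀ x ∈ Metric.closedBall xbar rstar,
      ‖fderiv ℝ T x - fderiv ℝ T xbar‖ ≤ Z₂ * ‖x - xbar‖)
    (rbar : ℝ) (hrbar0 : 0 < rbar) (hrbar : rbar ≤ rstar)
    (hP : Z₂ / 2 * rbar ^ 2 - (1 - Z₁) * rbar + Y < 0)
    (hQ : Z₁ + Z₂ * rbar < 1) :
    ∃! x : X, x ∈ Metric.closedBall xbar rbar ∧ T x = x := by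
  have hTd : Differentiable ℝ T := hT.differentiable one_ne_zero
  set A := fderiv ℝ T xbar with hA
  -- the closed ball of radius rbar sits inside the closed ball of radius rstar
  have hsub : Metric.closedBall xbar rbar ⊆ Metric.closedBall xbar rstar :=
    Metric.closedBall_subset_closedBall hrbar
  -- derivative bound on the small ball
  have hDbound : ∀ z ∈ Metric.closedBall xbar rbar, ‖fderiv ℝ T z‖ ≤ Z₁ + Z₂ * rbar := by
    intro z hz
    have h1 : ‖fderiv ℝ T z - A‖ ≤ Z₂ * ‖z - xbar‖ := hZ2 z (hsub hz)
    have h2 : ‖z - xbar‖ ≤ rbar := by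
      rw [← dist_eq_norm]; exact Metric.mem_closedBall.mp hz
    calc ‖fderiv ℝ T z‖ ≤ ‖fderiv ℝ T z - A‖ + ‖A‖ := by
          have := norm_add_le (fderiv ℝ T z - A) A
          simpa using this
      _ ≤ Z₂ * rbar + Z₁ := by
          have := mul_le_mul_of_nonneg_left h2 hZ20
          linarith [h1.trans this]
      _ = Z₁ + Z₂ * rbar := by ring
  -- Lipschitz estimate on the small ball
  have hLip : ∀ x ∈ Metric.closedBall xbar rbar, ∀ y ∈ Metric.closedBall xbar rbar,
      ‖T x - T y‖ ≤ (Z₁ + Z₂ * rbar) * ‖x - y‖ := by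
    intro x hx y hy
    exact (convex_closedBall xbar rbar).norm_image_sub_le_of_norm_fderiv_le
      (fun z _ => hTd z) hDbound hy hx
  -- quadratic Taylor bound
  have hTaylor : ∀ x ∈ Metric.closedBall xbar rbar,
      ‖T x - T xbar - A (x - xbar)‖ ≤ Z₂ / 2 * ‖x - xbar‖ ^ 2 := by
    intro x hx
    set v := x - xbar with hv
    have hvnorm : ‖v‖ ≤ rbar := by
      rw [hv, ← dist_eq_norm]; exact Metric.mem_closedBall.mp hx
    -- curve c t = xbar + t • v
    set c : ℝ → X := fun t => xbar + t • v with hc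
    have hcmem : ∀ t ∈ Set.uIcc (0:ℝ) 1, c t ∈ Metric.closedBall xbar rstar := by
      intro t ht
      rw [Set.uIcc_of_le (by norm_num : (0:ℝ) ≤ 1)] at ht
      simp only [hc, Metric.mem_closedBall, dist_eq_norm, add_sub_cancel_left, norm_smul,
        Real.norm_eq_abs, abs_of_nonneg ht.1]
      calc t * ‖v‖ ≤ 1 * ‖v‖ := by
            exact mul_le_mul_of_nonneg_right ht.2 (norm_nonneg _)
        _ = ‖v‖ := one_mul _
        _ ≤ rstar := hvnorm.trans hrbar
    -- h t = T (c t) - t • (A v), derivative (fderiv T (c t) - A) v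
    have hderiv : ∀ t : ℝ, HasDerivAt (fun t => T (c t) - t • (A v))
        ((fderiv ℝ T (c t) - A) v) t := by
      intro t
      have h1 : HasDerivAt c v t := by
        have : HasDerivAt (fun t : ℝ => t • v) v t := by
          simpa using (hasDerivAt_id t).smul_const v
        simpa [hc] using this.const_add xbar
      have h2 : HasDerivAt (fun t => T (c t)) (fderiv ℝ T (c t) v) t :=
        (hTd (c t)).hasFDerivAt.comp_hasDerivAt t h1
      have h3 : HasDerivAt (fun t : ℝ => t • (A v)) (A v) t := by
        simpa using (hasDerivAt_id t).smul_const (A v)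
      have := h2.sub h3; rw [ContinuousLinearMap.sub_apply]; exact this
    have hcont : Continuous fun t => (fderiv ℝ T (c t) - A) v := by
      have hfd : Continuous (fderiv ℝ T) := hT.continuous_fderiv one_ne_zero
      have hcc : Continuous c := by continuity
      exact ((hfd.comp hcc).sub continuous_const).clm_apply continuous_const
    have hint : IntervalIntegrable (fun t => (fderiv ℝ T (c t) - A) v)
        MeasureTheory.volume 0 1 := hcont.intervalIntegrable 0 1
    have heq : (∫ t in (0:ℝ)..1, (fderiv ℝ T (c t) - A) v) =
        (T (c 1) - (1:ℝ) • (A v)) - (T (c 0) - (0:ℝ) • (A v)) :=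
      intervalIntegral.integral_eq_sub_of_hasDerivAt (fun t _ => hderiv t) hint
    have hc1 : c 1 = x := by simp [hc, hv]
    have hc0 : c 0 = xbar := by simp [hc]
    have heq2 : T x - T xbar - A v = ∫ t in (0:ℝ)..1, (fderiv ℝ T (c t) - A) v := by
      rw [heq, hc1, hc0]; simp; abel
    rw [heq2]
    have hbound : ∀ t ∈ Set.Ioc (0:ℝ) 1,
        ‖(fderiv ℝ T (c t) - A) v‖ ≤ (Z₂ * ‖v‖ ^ 2) * t := by
      intro t ht
      have htu : t ∈ Set.uIcc (0:ℝ) 1 := by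
        rw [Set.uIcc_of_le (by norm_num : (0:ℝ) ≤ 1)]
        exact ⟨ht.1.le, ht.2⟩
      have h1 : ‖fderiv ℝ T (c t) - A‖ ≤ Z₂ * ‖c t - xbar‖ := hZ2 _ (hcmem t htu)
      have h2 : ‖c t - xbar‖ = t * ‖v‖ := by
        simp [hc, norm_smul, Real.norm_eq_abs, abs_of_nonneg ht.1.le]
      rw [h2] at h1
      calc ‖(fderiv ℝ T (c t) - A) v‖ ≤ ‖fderiv ℝ T (c t) - A‖ * ‖v‖ :=
            ContinuousLinearMap.le_opNorm _ _
        _ ≤ (Z₂ * (t * ‖v‖)) * ‖v‖ := mul_le_mul_of_nonneg_right h1 (norm_nonneg _)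
        _ = (Z₂ * ‖v‖ ^ 2) * t := by ring
    have habs : ‖∫ t in (0:ℝ)..1, (fderiv ℝ T (c t) - A) v‖
        ≤ |∫ t in (0:ℝ)..1, (Z₂ * ‖v‖ ^ 2) * t| := by
      refine (intervalIntegral.norm_integral_le_of_norm_le (by norm_num) ?_ ?_).trans (le_abs_self _)
      · exact Filter.Eventually.of_forall (fun t ht => hbound t ht)
      · exact (continuous_const.mul continuous_id).intervalIntegrable 0 1
    have hval : (∫ t in (0:ℝ)..1, (Z₂ * ‖v‖ ^ 2) * t) = Z₂ / 2 * ‖v‖ ^ 2 := by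
      rw [intervalIntegral.integral_const_mul]
      simp [integral_id]
      ring
    rw [hval, abs_of_nonneg (by positivity)] at habs
    exact habs
  -- T maps the small ball into itself
  have hmaps : ∀ x ∈ Metric.closedBall xbar rbar, T x ∈ Metric.closedBall xbar rbar := by
    intro x hx
    have hvnorm : ‖x - xbar‖ ≤ rbar := by
      rw [← dist_eq_norm]; exact Metric.mem_closedBall.mp hx
    have h1 : ‖T x - xbar‖ ≤ ‖T x - T xbar - A (x - xbar)‖ + ‖A (x - xbar)‖
        + ‖T xbar - xbar‖ := by
      have : T x - xbar = (T x - T xbar - A (x - xbar)) + A (x - xbar) + (T xbar - xbar) := by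
        abel
      rw [this]
      exact (norm_add_le _ _).trans (add_le_add_left (norm_add_le _ _) _)
    have h2 : ‖A (x - xbar)‖ ≤ Z₁ * rbar := by
      calc ‖A (x - xbar)‖ ≤ ‖A‖ * ‖x - xbar‖ := ContinuousLinearMap.le_opNorm _ _
        _ ≤ Z₁ * rbar := mul_le_mul hZ1 hvnorm (norm_nonneg _) hZ10
    have h3 : ‖T x - T xbar - A (x - xbar)‖ ≤ Z₂ / 2 * rbar ^ 2 := by
      refine (hTaylor x hx).trans ?_
      have : ‖x - xbar‖ ^ 2 ≤ rbar ^ 2 :=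
        pow_le_pow_left₀ (norm_nonneg _) hvnorm 2
      exact mul_le_mul_of_nonneg_left this (by positivity)
    rw [Metric.mem_closedBall, dist_eq_norm]
    linarith
  -- set up the complete subtype and the contraction
  set s := Metric.closedBall xbar rbar with hs
  have hsclosed : IsClosed s := Metric.isClosed_closedBall
  haveI : CompleteSpace s := hsclosed.completeSpace_coe
  haveI : Nonempty s := ⟨⟨xbar, Metric.mem_closedBall_self hrbar0.le⟩⟩
  set K : ℝ := Z₁ + Z₂ * rbar with hK
  have hK0 : 0 ≤ K := by positivity
  set F : s → s := fun p => ⟨T p, hmaps p p.2⟩ with hF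
  have hcontr : ContractingWith ⟨K, hK0⟩ F := by
    constructor
    · exact_mod_cast hQ
    · apply LipschitzWith.of_dist_le_mul
      intro p q
      have := hLip p p.2 q q.2
      simp only [hF, Subtype.dist_eq, dist_eq_norm]; exact this
  set xfix := hcontr.fixedPoint F
  have hfixpt : Function.IsFixedPt F xfix := hcontr.fixedPoint_isFixedPt
  refine ⟨(xfix : X), ⟨xfix.2, ?_⟩, ?_⟩
  · have := congrArg Subtype.val hfixpt
    simpa [hF] using this
  · rintro y ⟨hy, hyfix⟩
    have : Function.IsFixedPt F ⟨y, hy⟩ := by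
      apply Subtype.ext
      simpa [hF] using hyfix
    have := hcontr.fixedPoint_unique this
    exact congrArg Subtype.val this
end

section
/- Let M ∈ ℕ, and for each m ∈ {1,...,M} let (X^(m), ‖·‖_m) be a Banach space; equip the product X = ∏_m X^(m) with the max norm. Let F : X → X be C¹, x̄ ∈ X, A† : X → X linear, and A : X → X an injective bounded linear operator. Suppose for each m there are nonnegative constants Y^(m), Z₀^(m), Z₁^(m), Z₂^(m) with ‖(A F(x̄))^(m)‖_m ≤ Y^(m), ‖(I − A A†)^(m)‖ ≤ Z₀^(m), ‖(A(DF(x̄) − A†))^(m)‖ ≤ Z₁^(m), and ‖(A(DF(x) − DF(x̄)))^(m)‖ ≤ Z₂^(m)‖x − x̄‖ for all x within radius r* of x̄. If there exists r̄ ∈ (0, r*] such that for every m: (Z₂^(m)/2) r̄² − (1 − Z₀^(m) − Z₁^(m)) r̄ + Y^(m) < 0 and Z₀^(m) + Z₁^(m) + Z₂^(m) r̄ < 1, then F has a unique zero in the closed ball B(x̄, r̄) in X. -/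
open ContinuousLinearMap

set_option maxHeartbeats 1000000 in
/-- Corollary 5.2 of the paper (component-wise Newton–Kantorovich validation on a
product of Banach spaces): if the component-wise bounds `Y⁽ᵐ⁾, Z₀⁽ᵐ⁾, Z₁⁽ᵐ⁾, Z₂⁽ᵐ⁾`
hold and the radii polynomial conditions are satisfied at some `r̄ ∈ (0, r*]` for every
component `m`, then `F` has a unique zero in the closed ball of radius `r̄` around `x̄`. -/
theorem componentwise_validation_zero
    (M : ℕ) (E : Fin M → Type*)
    [∀ m, NormedAddCommGroup (E m)] [∀ m, NormedSpace ℝ (E m)]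
    [∀ m, CompleteSpace (E m)]
    (F : (∀ m, E m) → (∀ m, E m)) (hF : ContDiff ℝ 1 F)
    (xbar : ∀ m, E m)
    (Adag A : (∀ m, E m) →L[ℝ] (∀ m, E m))
    (hAinj : Function.Injective A)
    (Y Z₀ Z₁ Z₂ : Fin M → ℝ) (rstar : ℝ) (hrstar : 0 < rstar)
    (hY : ∀ m, ‖A (F xbar) m‖ ≤ Y m)
    (hZ0 : ∀ m, ‖(ContinuousLinearMap.proj m : (∀ i, E i) →L[ℝ] E m).comp
      (ContinuousLinearMap.id ℝ (∀ i, E i) - A.comp Adag)‖ ≤ Z₀ m)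
    (hZ1 : ∀ m, ‖(ContinuousLinearMap.proj m : (∀ i, E i) →L[ℝ] E m).comp
      (A.comp (fderiv ℝ F xbar - Adag))‖ ≤ Z₁ m)
    (hZ2 : ∀ m, ∀ x ∈ Metric.closedBall xbar rstar,
      ‖(ContinuousLinearMap.proj m : (∀ i, E i) →L[ℝ] E m).comp
        (A.comp (fderiv ℝ F x - fderiv ℝ F xbar))‖ ≤ Z₂ m * ‖x - xbar‖)
    (rbar : ℝ) (hrbar0 : 0 < rbar) (hrbar : rbar ≤ rstar)
    (hP : ∀ m, Z₂ m / 2 * rbar ^ 2 - (1 - Z₀ m - Z₁ m) * rbar + Y m < 0)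
    (hQ : ∀ m, Z₀ m + Z₁ m + Z₂ m * rbar < 1) :
    ∃! x : ∀ m, E m, x ∈ Metric.closedBall xbar rbar ∧ F x = 0 := by
  classical
  by_cases hsub : Subsingleton (∀ m, E m)
  · refine ⟨xbar, ⟨Metric.mem_closedBall_self hrbar0.le, Subsingleton.elim _ _⟩,
      fun y _ => Subsingleton.elim _ _⟩
  haveI hnt : Nontrivial (∀ m, E m) := not_subsingleton_iff_nontrivial.mp hsub
  have hM : Nonempty (Fin M) := by
    rcases Nat.eq_zero_or_pos M with h | h
    · exfalso; subst h
      exact hsub ⟨fun a b => funext fun i => i.elim0⟩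
    · exact ⟨⟨0, h⟩⟩
  set T : (∀ m, E m) → (∀ m, E m) := fun x => x - A (F x) with hT
  have hFd : ∀ z, HasFDerivAt F (fderiv ℝ F z) z := fun z =>
    (hF.differentiable one_ne_zero z).hasFDerivAt
  set DT : (∀ m, E m) → ((∀ m, E m) →L[ℝ] (∀ m, E m)) := fun z =>
    ContinuousLinearMap.id ℝ (∀ i, E i) - A.comp (fderiv ℝ F z) with hDT
  have hTd : ∀ z, HasFDerivAt T (DT z) z := by
    intro z
    exact (hasFDerivAt_id z).sub (A.hasFDerivAt.comp z (hFd z))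
  -- nonnegativity
  have hY0 : ∀ m, 0 ≤ Y m := fun m => (norm_nonneg _).trans (hY m)
  have hZ00 : ∀ m, 0 ≤ Z₀ m := fun m => (norm_nonneg _).trans (hZ0 m)
  have hZ10 : ∀ m, 0 ≤ Z₁ m := fun m => (norm_nonneg _).trans (hZ1 m)
  have hZ20 : ∀ m, 0 ≤ Z₂ m := by
    intro m
    obtain ⟨u, hu⟩ := exists_ne (0 : ∀ m, E m)
    have hun : 0 < ‖u‖ := norm_pos_iff.mpr hu
    set x : (∀ m, E m) := xbar + (rstar / ‖u‖) • u with hx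
    have hxn : ‖x - xbar‖ = rstar := by
      rw [hx, add_sub_cancel_left, norm_smul, Real.norm_eq_abs,
        abs_of_pos (div_pos hrstar hun), div_mul_cancel₀ _ hun.ne']
    have hxmem : x ∈ Metric.closedBall xbar rstar := by
      rw [Metric.mem_closedBall, dist_eq_norm, hxn]
    have := (norm_nonneg _).trans (hZ2 m x hxmem)
    rw [hxn] at this
    nlinarith
  -- derivative bound
  have hDTb : ∀ m, ∀ z ∈ Metric.closedBall xbar rstar,
      ‖(ContinuousLinearMap.proj m : (∀ i, E i) →L[ℝ] E m).comp (DT z)‖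
        ≤ Z₀ m + Z₁ m + Z₂ m * ‖z - xbar‖ := by
    intro m z hz
    have hdec : (ContinuousLinearMap.proj m : (∀ i, E i) →L[ℝ] E m).comp (DT z) =
        (ContinuousLinearMap.proj m : (∀ i, E i) →L[ℝ] E m).comp
          (ContinuousLinearMap.id ℝ (∀ i, E i) - A.comp Adag)
        - (ContinuousLinearMap.proj m : (∀ i, E i) →L[ℝ] E m).comp
            (A.comp (fderiv ℝ F xbar - Adag))
        - (ContinuousLinearMap.proj m : (∀ i, E i) →L[ℝ] E m).comp
            (A.comp (fderiv ℝ F z - fderiv ℝ F xbar)) := by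
      ext v
      simp [hDT, map_sub]
      try abel
    rw [hdec]
    calc ‖_ - _ - _‖ ≤ ‖_ - _‖ + ‖_‖ := norm_sub_le _ _
      _ ≤ ‖_‖ + ‖_‖ + ‖_‖ := by gcongr; exact norm_sub_le _ _
      _ ≤ Z₀ m + Z₁ m + Z₂ m * ‖z - xbar‖ := by
          gcongr
          exacts [hZ0 m, hZ1 m, hZ2 m z hz]
  -- contraction constant
  set κ : ℝ := Finset.univ.sup' (Finset.univ_nonempty) (fun m => Z₀ m + Z₁ m + Z₂ m * rbar)
    with hκdef
  have hκ1 : κ < 1 := by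
    rw [hκdef, Finset.sup'_lt_iff]
    exact fun m _ => hQ m
  have hκm : ∀ m, Z₀ m + Z₁ m + Z₂ m * rbar ≤ κ := by
    intro m
    rw [hκdef]
    exact Finset.le_sup' (fun m => Z₀ m + Z₁ m + Z₂ m * rbar) (Finset.mem_univ m)
  have hκ0 : 0 ≤ κ := by
    obtain ⟨m⟩ := hM
    have : 0 ≤ Z₀ m + Z₁ m + Z₂ m * rbar :=
      add_nonneg (add_nonneg (hZ00 m) (hZ10 m)) (mul_nonneg (hZ20 m) hrbar0.le)
    exact this.trans (hκm m)
  have hball : Metric.closedBall xbar rbar ⊆ Metric.closedBall xbar rstar :=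
    Metric.closedBall_subset_closedBall hrbar
  -- Lipschitz bound on the ball
  have hlip : ∀ x ∈ Metric.closedBall xbar rbar, ∀ y ∈ Metric.closedBall xbar rbar,
      ‖T y - T x‖ ≤ κ * ‖y - x‖ := by
    intro x hx y hy
    rw [pi_norm_le_iff_of_nonneg (by positivity)]
    intro m
    have key := Convex.norm_image_sub_le_of_norm_hasFDerivWithin_le
      (f := fun z => T z m)
      (f' := fun z => (ContinuousLinearMap.proj m : (∀ i, E i) →L[ℝ] E m).comp (DT z))
      (fun z hz => (((ContinuousLinearMap.proj m : (∀ i, E i) →L[ℝ] E m).hasFDerivAt.comp z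
        (hTd z)).hasFDerivWithinAt))
      (fun z hz => by
        have h1 := hDTb m z (hball hz)
        have h2 : ‖z - xbar‖ ≤ rbar := by
          rw [← dist_eq_norm]; exact hz
        calc ‖_‖ ≤ Z₀ m + Z₁ m + Z₂ m * ‖z - xbar‖ := h1
          _ ≤ Z₀ m + Z₁ m + Z₂ m * rbar := by nlinarith [hZ20 m]
          _ ≤ κ := hκm m)
      (convex_closedBall _ _) hx hy
    calc ‖(T y - T x) m‖ = ‖T y m - T x m‖ := by simp
      _ ≤ κ * ‖y - x‖ := key
  -- self-mapping
  have hself : ∀ x ∈ Metric.closedBall xbar rbar, T x ∈ Metric.closedBall xbar rbar := by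
    intro x hx
    set v : (∀ m, E m) := x - xbar with hv
    set s : ℝ := ‖v‖ with hs
    have hs0 : 0 ≤ s := norm_nonneg _
    have hsr : s ≤ rbar := by rw [hs, hv, ← dist_eq_norm]; exact hx
    rw [Metric.mem_closedBall, dist_eq_norm, pi_norm_le_iff_of_nonneg hrbar0.le]
    intro m
    set γ : ℝ → (∀ m, E m) := fun t => xbar + t • v with hγ
    have hγd : ∀ t : ℝ, HasDerivAt γ v t := by
      intro t
      simpa [hγ] using ((hasDerivAt_id t).smul_const v).const_add xbar
    set f : ℝ → E m := fun t => T (γ t) m - T xbar m with hf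
    have hfd : ∀ t : ℝ, HasDerivAt f
        (((ContinuousLinearMap.proj m : (∀ i, E i) →L[ℝ] E m).comp (DT (γ t))) v) t := by
      intro t
      have h1 : HasFDerivAt (fun z => T z m)
          ((ContinuousLinearMap.proj m : (∀ i, E i) →L[ℝ] E m).comp (DT (γ t))) (γ t) :=
        (ContinuousLinearMap.proj m : (∀ i, E i) →L[ℝ] E m).hasFDerivAt.comp (γ t) (hTd (γ t))
      simpa [hf] using (h1.comp_hasDerivAt t (hγd t)).sub_const (T xbar m)
    have hγmem : ∀ t ∈ Set.Icc (0:ℝ) 1, γ t ∈ Metric.closedBall xbar rstar := by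
      intro t ht
      rw [Metric.mem_closedBall, dist_eq_norm, hγ]
      simp only [add_sub_cancel_left, norm_smul, Real.norm_eq_abs, abs_of_nonneg ht.1]
      nlinarith [ht.1, ht.2]
    have hγn : ∀ t ∈ Set.Icc (0:ℝ) 1, ‖γ t - xbar‖ = t * s := by
      intro t ht
      rw [hγ]
      simp [norm_smul, Real.norm_eq_abs, abs_of_nonneg ht.1, hs]
    set c1 : ℝ := (Z₀ m + Z₁ m) * s with hc1
    set c2 : ℝ := Z₂ m * s ^ 2 with hc2
    have hBd : ∀ t : ℝ, HasDerivAt (fun t => c1 * t + c2 / 2 * t ^ 2) (c1 + c2 * t) t := by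
      intro t
      have h1 : HasDerivAt (fun t : ℝ => c1 * t + c2 / 2 * t ^ 2)
          (c1 * 1 + c2 / 2 * (↑2 * t ^ 1)) t :=
        ((hasDerivAt_id t).const_mul c1).add ((hasDerivAt_pow 2 t).const_mul (c2 / 2))
      convert h1 using 1
      ring
    have key : ‖f 1‖ ≤ c1 * 1 + c2 / 2 * 1 ^ 2 := by
      refine image_norm_le_of_norm_deriv_right_le_deriv_boundary
        (f := f) (a := 0) (b := 1)
        (fun t ht => (hfd t).continuousAt.continuousWithinAt)
        (fun t ht => (hfd t).hasDerivWithinAt)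
        (by simp [hf, hγ]) hBd ?_ (Set.right_mem_Icc.mpr zero_le_one)
      intro t ht
      have ht' : t ∈ Set.Icc (0:ℝ) 1 := ⟨ht.1, ht.2.le⟩
      have h1 := hDTb m (γ t) (hγmem t ht')
      rw [hγn t ht'] at h1
      calc ‖_‖ ≤ ‖(ContinuousLinearMap.proj m : (∀ i, E i) →L[ℝ] E m).comp (DT (γ t))‖ * ‖v‖ :=
            le_opNorm _ _
        _ ≤ (Z₀ m + Z₁ m + Z₂ m * (t * s)) * s :=
            mul_le_mul_of_nonneg_right h1 hs0
        _ = c1 + c2 * t := by rw [hc1, hc2]; ring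
    have hf1 : f 1 = T x m - T xbar m := by
      simp [hf, hγ, hv]
    have hTx : ‖T x m - xbar m‖ ≤ ‖T x m - T xbar m‖ + ‖T xbar m - xbar m‖ :=
      norm_sub_le_norm_sub_add_norm_sub _ _ _
    have hTxbar : ‖T xbar m - xbar m‖ ≤ Y m := by
      have : T xbar m - xbar m = -(A (F xbar) m) := by simp [hT]
      rw [this, norm_neg]
      exact hY m
    have hfin : ‖T x m - T xbar m‖ ≤ c1 + c2 / 2 := by
      have := key
      rw [hf1] at this
      calc ‖T x m - T xbar m‖ ≤ c1 * 1 + c2 / 2 * 1 ^ 2 := this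
        _ = c1 + c2 / 2 := by ring
    have hP' := hP m
    calc ‖(T x - xbar) m‖ = ‖T x m - xbar m‖ := by simp
      _ ≤ c1 + c2 / 2 + Y m := by linarith
      _ ≤ rbar := by
          rw [hc1, hc2]
          nlinarith [hZ20 m, hZ00 m, hZ10 m, mul_nonneg (hZ20 m)
            (mul_nonneg (sub_nonneg.2 hsr) (by linarith : (0:ℝ) ≤ rbar + s)),
            mul_nonneg (add_nonneg (hZ00 m) (hZ10 m)) (sub_nonneg.2 hsr)]
  -- fixed point machinery
  set S := Metric.closedBall xbar rbar with hS
  haveI : CompleteSpace S := Metric.isClosed_closedBall.completeSpace_coe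
  haveI : Nonempty S := ⟨⟨xbar, Metric.mem_closedBall_self hrbar0.le⟩⟩
  set T' : S → S := fun z => ⟨T z.1, hself z.1 z.2⟩ with hT'
  have hcontr : ContractingWith ⟨κ, hκ0⟩ T' := by
    constructor
    · exact_mod_cast hκ1
    · refine LipschitzWith.of_dist_le_mul fun a b => ?_
      have := hlip b.1 b.2 a.1 a.2
      simp [hT', Subtype.dist_eq, dist_eq_norm]; exact this
  set x0 : S := hcontr.fixedPoint T' with hx0
  have hfix : T x0.1 = x0.1 := congrArg Subtype.val (hcontr.fixedPoint_isFixedPt)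
  have hFx0 : F x0.1 = 0 := by
    have hA0 : A (F x0.1) = 0 := by
      have : x0.1 - A (F x0.1) = x0.1 := hfix
      linear_combination (norm := abel) -this
    have : A (F x0.1) = A 0 := by rw [hA0, map_zero]
    exact hAinj this
  refine ⟨x0.1, ⟨x0.2, hFx0⟩, ?_⟩
  rintro y ⟨hy, hFy⟩
  have hTy : T y = y := by simp [hT, hFy]
  have hTx0 : T x0.1 = x0.1 := hfix
  have := hlip y hy x0.1 x0.2
  rw [hTy, hTx0] at this
  have h0 : ‖x0.1 - y‖ = 0 := by nlinarith [norm_nonneg (x0.1 - y)]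
  have := sub_eq_zero.mp (norm_eq_zero.mp h0)
  exact this.symm
end
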